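/- For positive integers n, m and λ ∈ (0,1), with σ² = 1/(4(n+m)) and μ = n/(n+m): ∫_0^λ u e^{−2n(λ−u)²} e^{−2mu²} du = σ² e^{−2nλ²} − σ² e^{−2mλ²} + λμ √(2π) σ C e^{−2nmλ²/(n+m)}, where C = P(N(λμ, σ²) ∈ [0, λ]) and N denotes the Gaussian distribution. -/

import Mathlib

open MeasureTheory ProbabilityTheory
open scoped NNReal

/-- Gaussian integral identity: with `σ² = 1/(4(n+m))`, `μ = n/(n+m)`,
and `C = P(N(λμ, σ²) ∈ [0, λ])`,
`∫₀^λ u e^{−2n(λ−u)²} e^{−2mu²} du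
   = σ² e^{−2nλ²} − σ² e^{−2mλ²} + λμ √(2π) σ C e^{−2nmλ²/(n+m)}`. -/
theorem gaussian_integral_identity
    (n m : ℕ) (hn : 0 < n) (hm : 0 < m)
    (lam : ℝ) (hlam : lam ∈ Set.Ioo (0 : ℝ) 1)
    (σ2 : ℝ) (hσ2 : σ2 = 1 / (4 * ((n : ℝ) + m)))
    (μ : ℝ) (hμ : μ = (n : ℝ) / (n + m))
    (v : ℝ≥0) (hv : (v : ℝ) = σ2)
    (C : ℝ) (hC : C = (gaussianReal (lam * μ) v (Set.Icc 0 lam)).toReal) :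
    ∫ u in (0 : ℝ)..lam,
        u * Real.exp (-2 * n * (lam - u) ^ 2) * Real.exp (-2 * m * u ^ 2)
      = σ2 * Real.exp (-2 * n * lam ^ 2) - σ2 * Real.exp (-2 * m * lam ^ 2)
        + lam * μ * Real.sqrt (2 * Real.pi) * Real.sqrt σ2 * C
          * Real.exp (-2 * n * m * lam ^ 2 / (n + m)) := by
  obtain ⟨hl0, hl1⟩ := hlam
  have hnpos : (0:ℝ) < n := Nat.cast_pos.mpr hn
  have hmpos : (0:ℝ) < m := Nat.cast_pos.mpr hm
  have ha : (0:ℝ) < (n:ℝ) + m := by positivity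
  have ha' : ((n:ℝ) + m) ≠ 0 := ne_of_gt ha
  have hσpos : 0 < σ2 := by rw [hσ2]; positivity
  have hσne : σ2 ≠ 0 := ne_of_gt hσpos
  have hvne : v ≠ 0 := by
    intro h
    rw [h] at hv
    exact hσne (by simpa using hv.symm)
  set c : ℝ := lam * μ with hc
  set E : ℝ := Real.exp (-2 * n * m * lam ^ 2 / ((n:ℝ) + m)) with hE
  -- pointwise completing the square
  have key : ∀ u : ℝ, Real.exp (-2 * n * (lam - u) ^ 2) * Real.exp (-2 * m * u ^ 2)
      = Real.exp (-(u - c) ^ 2 / (2 * σ2)) * E := by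
    intro u
    rw [← Real.exp_add, ← Real.exp_add]
    congr 1
    rw [hσ2, hc, hμ]
    field_simp
    ring
  set G : ℝ → ℝ := fun u => Real.exp (-(u - c) ^ 2 / (2 * σ2)) with hG
  have hGcont : Continuous G := by fun_prop
  have hint1 : IntervalIntegrable (fun u => (u - c) * G u) volume 0 lam :=
    (Continuous.mul (by fun_prop) hGcont).intervalIntegrable _ _
  have hint2 : IntervalIntegrable (fun u => c * G u) volume 0 lam :=
    (continuous_const.mul hGcont).intervalIntegrable _ _
  -- FTC part
  have I1 : ∫ u in (0:ℝ)..lam, (u - c) * G u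
      = σ2 * Real.exp (-(0 - c) ^ 2 / (2 * σ2)) - σ2 * Real.exp (-(lam - c) ^ 2 / (2 * σ2)) := by
    have hderiv : ∀ u ∈ Set.uIcc (0:ℝ) lam,
        HasDerivAt (fun u => -σ2 * Real.exp (-(u - c) ^ 2 / (2 * σ2))) ((u - c) * G u) u := by
      intro u _
      have h1 : HasDerivAt (fun u : ℝ => -(u - c) ^ 2 / (2 * σ2))
          (-(2 * (u - c) ^ 1 * 1) / (2 * σ2)) u := by
        exact (((hasDerivAt_id u).sub_const c).pow 2).neg.div_const _
      have h2 := (h1.exp).const_mul (-σ2)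
      convert h2 using 1
      · rfl
      · rfl
      simp only [hG]
      field_simp
    rw [intervalIntegral.integral_eq_sub_of_hasDerivAt hderiv
      ((Continuous.mul (by fun_prop) hGcont).intervalIntegrable _ _)]
    ring
  -- Gaussian part
  have hCint : C = ∫ x in Set.Icc (0:ℝ) lam, gaussianPDFReal c v x := by
    rw [hC, gaussianReal_apply_eq_integral _ hvne, ENNReal.toReal_ofReal]
    exact setIntegral_nonneg measurableSet_Icc fun x _ => gaussianPDFReal_nonneg _ _ _
  have hsqrtpos : (0:ℝ) < Real.sqrt (2 * Real.pi * σ2) := by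
    apply Real.sqrt_pos.mpr; positivity
  have I2 : ∫ u in (0:ℝ)..lam, G u = Real.sqrt (2 * Real.pi * σ2) * C := by
    have hpdf : ∀ x : ℝ, gaussianPDFReal c v x = (Real.sqrt (2 * Real.pi * σ2))⁻¹ * G x := by
      intro x
      rw [gaussianPDFReal, hv, hG]
    rw [hCint, intervalIntegral.integral_of_le hl0.le,
      ← MeasureTheory.integral_Icc_eq_integral_Ioc]
    simp_rw [hpdf]
    rw [integral_const_mul]
    field_simp
  -- assemble
  have hsplit : ∫ u in (0:ℝ)..lam,
      u * Real.exp (-2 * n * (lam - u) ^ 2) * Real.exp (-2 * m * u ^ 2)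
      = ((∫ u in (0:ℝ)..lam, (u - c) * G u) + c * ∫ u in (0:ℝ)..lam, G u) * E := by
    have : ∀ u : ℝ, u * Real.exp (-2 * n * (lam - u) ^ 2) * Real.exp (-2 * m * u ^ 2)
        = ((u - c) * G u) * E + (c * G u) * E := by
      intro u
      rw [mul_assoc, key u, hG]
      ring
    simp_rw [this]
    rw [intervalIntegral.integral_add (hint1.mul_const E) (hint2.mul_const E),
      intervalIntegral.integral_mul_const, intervalIntegral.integral_mul_const,
      ← intervalIntegral.integral_const_mul]
    ring
  rw [hsplit, I1, I2]
  have e1 : Real.exp (-(0 - c) ^ 2 / (2 * σ2)) * E = Real.exp (-2 * n * lam ^ 2) := by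
    rw [hE, ← Real.exp_add]
    congr 1
    rw [hσ2, hc, hμ]
    field_simp
    ring
  have e2 : Real.exp (-(lam - c) ^ 2 / (2 * σ2)) * E = Real.exp (-2 * m * lam ^ 2) := by
    rw [hE, ← Real.exp_add]
    congr 1
    rw [hσ2, hc, hμ]
    field_simp
    ring
  have e3 : Real.sqrt (2 * Real.pi * σ2) = Real.sqrt (2 * Real.pi) * Real.sqrt σ2 :=
    Real.sqrt_mul (by positivity) σ2
  calc (σ2 * Real.exp (-(0 - c) ^ 2 / (2 * σ2)) - σ2 * Real.exp (-(lam - c) ^ 2 / (2 * σ2))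
        + c * (Real.sqrt (2 * Real.pi * σ2) * C)) * E
      = σ2 * (Real.exp (-(0 - c) ^ 2 / (2 * σ2)) * E)
        - σ2 * (Real.exp (-(lam - c) ^ 2 / (2 * σ2)) * E)
        + c * Real.sqrt (2 * Real.pi * σ2) * C * E := by ring
    _ = _ := by rw [e1, e2, e3, hc]; ring
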